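/- A finite simple graph G is perfect if and only if the set of x ∈ ℝ^V satisfying the box and clique constraints of G equals STAB(G), the convex hull of the 0/1 incidence vectors of the stable sets of G. -/

import Mathlib

open Finset SimpleGraph

namespace TPerfection

variable {V : Type*}

/-- A stable (independent) set of vertices: pairwise non-adjacent. -/
def IsStableSet (G : SimpleGraph V) (S : Finset V) : Prop :=
  ∀ u ∈ S, ∀ v ∈ S, ¬ G.Adj u v

/-- STAB(G): convex hull of incidence vectors of stable sets. -/
def stabPolytope (G : SimpleGraph V) [Fintype V] [DecidableEq V] : Set (V → ℝ) :=
  convexHull ℝ { x | ∃ S : Finset V, IsStableSet G S ∧ x = fun v => if v ∈ S then (1 : ℝ) else 0 }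

/-- `c` is an induced (chordless) cycle of `G`. -/
def IsInducedCycle (G : SimpleGraph V) {u : V} (c : G.Walk u u) : Prop :=
  c.IsCycle ∧ ∀ x y : V, x ∈ c.support → y ∈ c.support → G.Adj x y → s(x, y) ∈ c.edges

def boxConstraints (x : V → ℝ) : Prop := ∀ v, 0 ≤ x v ∧ x v ≤ 1

def edgeConstraints (G : SimpleGraph V) (x : V → ℝ) : Prop :=
  ∀ u v : V, G.Adj u v → x u + x v ≤ 1

def cliqueConstraints (G : SimpleGraph V) (x : V → ℝ) : Prop :=
  ∀ K : Finset V, G.IsClique (K : Set V) → ∑ v ∈ K, x v ≤ 1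

def oddCycleConstraints [DecidableEq V] (G : SimpleGraph V) (x : V → ℝ) : Prop :=
  ∀ (u : V) (c : G.Walk u u), IsInducedCycle G c → Odd c.length →
    ∑ v ∈ c.support.toFinset, x v ≤ ((c.length : ℝ) - 1) / 2

/-- Solution set of box, edge and odd-cycle constraints. -/
def tPolytope (G : SimpleGraph V) [DecidableEq V] : Set (V → ℝ) :=
  { x | boxConstraints x ∧ edgeConstraints G x ∧ oddCycleConstraints G x }

/-- Solution set of box, clique and odd-cycle constraints. -/
def hPolytope (G : SimpleGraph V) [DecidableEq V] : Set (V → ℝ) :=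
  { x | boxConstraints x ∧ cliqueConstraints G x ∧ oddCycleConstraints G x }

/-- Solution set of box and clique constraints. -/
def qstabPolytope (G : SimpleGraph V) : Set (V → ℝ) :=
  { x | boxConstraints x ∧ cliqueConstraints G x }

def TPerfect (G : SimpleGraph V) [Fintype V] [DecidableEq V] : Prop :=
  tPolytope G = stabPolytope G

def HPerfect (G : SimpleGraph V) [Fintype V] [DecidableEq V] : Prop :=
  hPolytope G = stabPolytope G

/-- The clique number, as an extended natural number. -/
noncomputable def cliqueNumber (G : SimpleGraph V) : ℕ∞ :=
  sSup ((fun n : ℕ => (n : ℕ∞)) '' { n | ∃ K : Finset V, G.IsNClique n K })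

/-- A graph is perfect if every induced subgraph has chromatic number equal to
clique number. -/
def IsPerfect (G : SimpleGraph V) : Prop :=
  ∀ S : Set V, (G.induce S).chromaticNumber = cliqueNumber (G.induce S)

/-- `G` is a loose wheel with hub `hub` and rim `c`: `c` is a cycle, `hub` lies outside
of it and has at least three neighbours on it, and the rim together with the hub
comprise all vertices and edges of `G`. -/
structure IsLooseWheel (G : SimpleGraph V) (hub : V) {u : V} (c : G.Walk u u) : Prop where
  isCycle : c.IsCycle
  hub_not_mem : hub ∉ c.support
  spokes : ∃ w₁ w₂ w₃ : V, w₁ ∈ c.support ∧ w₂ ∈ c.support ∧ w₃ ∈ c.support ∧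
    w₁ ≠ w₂ ∧ w₁ ≠ w₃ ∧ w₂ ≠ w₃ ∧ G.Adj hub w₁ ∧ G.Adj hub w₂ ∧ G.Adj hub w₃
  vertex_cover : ∀ w : V, w ∈ c.support ∨ w = hub
  edge_cover : ∀ x y : V, G.Adj x y → s(x, y) ∈ c.edges ∨ x = hub ∨ y = hub

/-- A segment of a loose wheel: a path of the rim joining two neighbours of the hub
and containing no other neighbour of the hub. -/
def IsSegment (G : SimpleGraph V) (hub : V) {u : V} (c : G.Walk u u)
    {a b : V} (p : G.Walk a b) : Prop :=
  p.IsPath ∧ a ≠ b ∧ G.Adj hub a ∧ G.Adj hub b ∧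
    (∀ e ∈ p.edges, e ∈ c.edges) ∧
    (∀ w ∈ p.support, G.Adj hub w → w = a ∨ w = b)

/-- `G` is a loose odd wheel: a loose wheel with odd rim having at least three
(pairwise distinct, hence pairwise edge-disjoint) segments of odd length. -/
def IsLooseOddWheel [DecidableEq V] (G : SimpleGraph V) : Prop :=
  ∃ (hub u : V) (c : G.Walk u u), IsLooseWheel G hub c ∧ Odd c.length ∧
    ∃ (a₁ b₁ : V) (p₁ : G.Walk a₁ b₁) (a₂ b₂ : V) (p₂ : G.Walk a₂ b₂)
      (a₃ b₃ : V) (p₃ : G.Walk a₃ b₃),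
      IsSegment G hub c p₁ ∧ IsSegment G hub c p₂ ∧ IsSegment G hub c p₃ ∧
      Odd p₁.length ∧ Odd p₂.length ∧ Odd p₃.length ∧
      Disjoint p₁.edges.toFinset p₂.edges.toFinset ∧
      Disjoint p₁.edges.toFinset p₃.edges.toFinset ∧
      Disjoint p₂.edges.toFinset p₃.edges.toFinset

/-- The neighbourhood of `v` is a stable set. -/
def StableNeighborhood (G : SimpleGraph V) (v : V) : Prop :=
  ∀ x y : V, G.Adj v x → G.Adj v y → ¬ G.Adj x y

/-- The t-contraction of `G` at `v`: delete `{v} ∪ N(v)` and add a new vertex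
(`none`) adjacent exactly to the remaining vertices having a neighbour in `N(v)`. -/
def tContract (G : SimpleGraph V) (v : V) :
    SimpleGraph (Option { w : V // w ≠ v ∧ ¬ G.Adj v w }) where
  Adj x y :=
    match x, y with
    | none, none => False
    | none, some b => ∃ n, G.Adj v n ∧ G.Adj b.1 n
    | some a, none => ∃ n, G.Adj v n ∧ G.Adj a.1 n
    | some a, some b => G.Adj a.1 b.1
  symm := by
    constructor
    rintro (_ | a) (_ | b) h
    · exact h
    · exact h
    · exact h
    · exact h.symm
  loopless := by
    constructor
    rintro (_ | a) h
    · exact h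
    · exact G.loopless.1 _ h

/-- The wheel with hub `none` and rim the cycle of length `k` on `Fin k`. -/
def wheelGraph (k : ℕ) : SimpleGraph (Option (Fin k)) where
  Adj x y :=
    match x, y with
    | none, none => False
    | none, some _ => True
    | some _, none => True
    | some i, some j => i ≠ j ∧ ((i.1 + 1) % k = j.1 ∨ (j.1 + 1) % k = i.1)
  symm := by
    constructor
    rintro (_ | i) (_ | j) h
    · exact h
    · trivial
    · trivial
    · exact ⟨h.1.symm, h.2.symm⟩
  loopless := by
    constructor
    rintro (_ | i) h
    · exact h
    · exact h.1 rfl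

/-- One step of t-contraction between (isomorphism classes of) graphs. -/
def TContractStep : (Σ α : Type, SimpleGraph α) → (Σ α : Type, SimpleGraph α) → Prop :=
  fun G H => ∃ v : G.1, StableNeighborhood G.2 v ∧ Nonempty (H.2 ≃g tContract G.2 v)




section AuxiliaryLemmas

set_option linter.unusedSectionVars false

/-! ### basic lemmas -/

section Basic
variable [Fintype V] [DecidableEq V] (G : SimpleGraph V)

/-- intersection of clique and stable set has at most one vertex -/
lemma clique_stable_card {K T : Finset V} (hK : G.IsClique (K : Set V))
    (hT : IsStableSet G T) : (K.filter (· ∈ T)).card ≤ 1 := by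
  rw [Finset.card_le_one]
  rintro a ha b hb
  simp only [mem_filter] at ha hb
  by_contra hne
  exact hT a ha.2 b hb.2 (hK ha.1 hb.1 hne)

lemma sum_indicator_eq {K T : Finset V} :
    ∑ v ∈ K, (if v ∈ T then (1 : ℝ) else 0) = ((K.filter (· ∈ T)).card : ℝ) := by
  rw [Finset.sum_boole]

lemma qstab_convex : Convex ℝ (qstabPolytope G) := by
  intro x hx y hy a b ha hb hab
  obtain ⟨hxb, hxc⟩ := hx
  obtain ⟨hyb, hyc⟩ := hy
  constructor
  · intro v
    constructor
    · exact add_nonneg (mul_nonneg ha (hxb v).1) (mul_nonneg hb (hyb v).1)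
    · calc a * x v + b * y v ≤ a * 1 + b * 1 := by
            gcongr; exacts [(hxb v).2, (hyb v).2]
        _ = 1 := by linarith
  · intro K hK
    simp only [Pi.add_apply, Pi.smul_apply, smul_eq_mul]
    rw [Finset.sum_add_distrib, ← Finset.mul_sum, ← Finset.mul_sum]
    calc a * ∑ v ∈ K, x v + b * ∑ v ∈ K, y v ≤ a * 1 + b * 1 := by
          gcongr; exacts [hxc K hK, hyc K hK]
      _ = 1 := by linarith

lemma stab_subset_qstab : stabPolytope G ⊆ qstabPolytope G := by
  apply convexHull_min _ (qstab_convex G)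
  rintro x ⟨S, hS, rfl⟩
  constructor
  · intro v; dsimp only; split <;> norm_num
  · intro K hK
    rw [sum_indicator_eq]
    exact_mod_cast clique_stable_card G hK hS

lemma isClosed_stab : IsClosed (stabPolytope G) := by
  apply Set.Finite.isClosed_convexHull
  apply Set.Finite.subset (Set.finite_range (fun S : Finset V => fun v => if v ∈ S then (1:ℝ) else 0))
  rintro x ⟨S, _, rfl⟩
  exact ⟨S, rfl⟩

/-- constructor for membership in STAB -/
lemma mem_stab_of {x : V → ℝ} (w : Finset V → ℝ) (h0 : ∀ S, 0 ≤ w S)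
    (hst : ∀ S, w S ≠ 0 → IsStableSet G S) (h1 : ∑ S : Finset V, w S = 1)
    (hx : ∀ v, x v = ∑ S : Finset V, w S * (if v ∈ S then 1 else 0)) :
    x ∈ stabPolytope G := by
  classical
  have hmem : ∀ S ∈ Finset.univ.filter (fun S => w S ≠ 0),
      (fun v => if v ∈ S then (1:ℝ) else 0) ∈
        { x : V → ℝ | ∃ S : Finset V, IsStableSet G S ∧ x = fun v => if v ∈ S then (1 : ℝ) else 0 } := by
    intro S hS
    rw [mem_filter] at hS
    exact ⟨S, hst S hS.2, rfl⟩
  have hsum : ∑ S ∈ Finset.univ.filter (fun S => w S ≠ 0), w S = 1 := by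
    rw [Finset.sum_filter_ne_zero]; exact h1
  have := Finset.centerMass_mem_convexHull (Finset.univ.filter (fun S => w S ≠ 0))
    (fun S hS => h0 S) (by rw [hsum]; norm_num)
    hmem
  convert this using 1
  · rfl
  rw [Finset.centerMass, hsum, inv_one, one_smul]
  funext v
  rw [hx v, Finset.sum_apply]
  rw [Finset.sum_filter_of_ne]
  · rfl
  · intro S _ h
    intro hw
    exact h (by rw [hw]; simp)

/-- destructor for membership in STAB -/
lemma exists_of_mem_stab {x : V → ℝ} (hx : x ∈ stabPolytope G) :
    ∃ w : Finset V → ℝ, (∀ S, 0 ≤ w S) ∧ (∀ S, w S ≠ 0 → IsStableSet G S) ∧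
      (∑ S : Finset V, w S = 1) ∧
      ∀ v, x v = ∑ S : Finset V, w S * (if v ∈ S then 1 else 0) := by
  classical
  rw [stabPolytope, _root_.convexHull_eq] at hx
  obtain ⟨ι, t, w, z, hw0, hw1, hz, hcm⟩ := hx
  choose! T hT1 hT2 using hz
  refine ⟨fun S => ∑ i ∈ t.filter (fun i => T i = S), w i, ?_, ?_, ?_, ?_⟩
  · intro S; exact Finset.sum_nonneg fun i hi => hw0 i (Finset.mem_filter.mp hi).1
  · intro S hS
    obtain ⟨i, hi⟩ : ∃ i ∈ t.filter (fun i => T i = S), w i ≠ 0 := by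
      by_contra h
      push_neg at h
      exact hS (Finset.sum_eq_zero h)
    rw [Finset.mem_filter] at hi
    obtain ⟨⟨hit, hTi⟩, _⟩ := hi
    rw [← hTi]
    exact hT1 i hit
  · rw [← hw1]
    exact Finset.sum_fiberwise_of_maps_to (fun i _ => Finset.mem_univ (T i)) w
  · intro v
    have hxv : x v = ∑ i ∈ t, w i * z i v := by
      rw [← hcm, Finset.centerMass, hw1, inv_one, one_smul, Finset.sum_apply]
      rfl
    rw [hxv]
    rw [← Finset.sum_fiberwise_of_maps_to (fun i _ => Finset.mem_univ (T i))
      (fun i => w i * z i v)]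
    apply Finset.sum_congr rfl
    intro S _
    rw [Finset.sum_mul]
    apply Finset.sum_congr rfl
    intro i hi
    rw [Finset.mem_filter] at hi
    rw [hT2 i hi.1, hi.2]

end Basic

section Omega
variable [Fintype V] [DecidableEq V] (G : SimpleGraph V)

open Classical in
noncomputable def maxCliqueCard : ℕ :=
  (Finset.univ.filter (fun K : Finset V => G.IsClique (K : Set V))).sup Finset.card

open Classical in
lemma card_le_maxCliqueCard {K : Finset V} (hK : G.IsClique (K : Set V)) :
    K.card ≤ maxCliqueCard G :=
  Finset.le_sup (f := Finset.card) (Finset.mem_filter.mpr ⟨Finset.mem_univ _, hK⟩)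

open Classical in
lemma exists_maxClique : ∃ K : Finset V, G.IsClique (K : Set V) ∧ K.card = maxCliqueCard G := by
  have hne : (Finset.univ.filter (fun K : Finset V => G.IsClique (K : Set V))).Nonempty := by
    refine ⟨∅, Finset.mem_filter.mpr ⟨Finset.mem_univ _, ?_⟩⟩
    simp [SimpleGraph.IsClique, Set.pairwise_empty]
  obtain ⟨K, hK, hcard⟩ := Finset.exists_mem_eq_sup _ hne Finset.card
  rw [Finset.mem_filter] at hK
  exact ⟨K, hK.2, hcard.symm⟩

open Classical in
lemma maxCliqueCard_le {n : ℕ} (h : ∀ K : Finset V, G.IsClique (K : Set V) → K.card ≤ n) :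
    maxCliqueCard G ≤ n := by
  apply Finset.sup_le
  intro K hK
  rw [Finset.mem_filter] at hK
  exact h K hK.2

lemma cliqueNumber_eq_maxCliqueCard : cliqueNumber G = (maxCliqueCard G : ℕ∞) := by
  apply le_antisymm
  · apply sSup_le
    rintro _ ⟨n, ⟨K, hK⟩, rfl⟩
    rw [Nat.cast_le, ← hK.2]
    exact card_le_maxCliqueCard G hK.1
  · apply le_sSup
    obtain ⟨K, hK, hcard⟩ := exists_maxClique G
    exact ⟨maxCliqueCard G, ⟨K, hK, hcard⟩, rfl⟩

lemma chromaticNumber_eq_cliqueNumber_of_colorable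
    (h : G.Colorable (maxCliqueCard G)) : G.chromaticNumber = cliqueNumber G := by
  rw [cliqueNumber_eq_maxCliqueCard]
  apply le_antisymm
  · exact h.chromaticNumber_le
  · obtain ⟨K, hK, hcard⟩ := exists_maxClique G
    rw [← hcard]
    exact hK.card_le_chromaticNumber

end Omega

section Transfer
variable {G : SimpleGraph V} {S : Set V}

lemma clique_map_val {K : Finset ↥S} (h : (G.induce S).IsClique (K : Set ↥S)) :
    G.IsClique ((K.map (Function.Embedding.subtype _) : Finset V) : Set V) := by
  intro a ha b hb hne
  simp only [Finset.coe_map, Set.mem_image, Finset.mem_coe,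
    Function.Embedding.coe_subtype] at ha hb
  obtain ⟨a', ha', rfl⟩ := ha
  obtain ⟨b', hb', rfl⟩ := hb
  have hne' : a' ≠ b' := fun hh => hne (by rw [hh])
  exact h ha' hb' hne'

lemma clique_subtype [DecidablePred (· ∈ S)] {K : Finset V} (h : G.IsClique (K : Set V)) :
    (G.induce S).IsClique ((K.subtype (· ∈ S) : Finset ↥S) : Set ↥S) := by
  intro a ha b hb hne
  rw [Finset.mem_coe, Finset.mem_subtype] at ha hb
  exact h ha hb (fun hh => hne (Subtype.coe_injective hh))

end Transfer

section Helpers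
variable [DecidableEq V]

lemma count_snoc (C : ℕ → Finset V) (D : Finset V) (r : ℕ) (v : V) :
    ((Finset.range (r+1)).filter (fun i => v ∈ (if i = r then D else C i))).card
      = ((Finset.range r).filter (fun i => v ∈ C i)).card + (if v ∈ D then 1 else 0) := by
  have hr : (if r = r then D else C r) = D := if_pos rfl
  rw [Finset.range_add_one, Finset.filter_insert, hr]
  have hcongr : (Finset.range r).filter (fun i => v ∈ (if i = r then D else C i))
      = (Finset.range r).filter (fun i => v ∈ C i) := by
    apply Finset.filter_congr
    intro i hi
    rw [Finset.mem_range] at hi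
    rw [if_neg hi.ne]
  by_cases hv : v ∈ D
  · rw [if_pos hv, if_pos hv, Finset.card_insert_of_notMem, hcongr]
    intro hmem
    have := Finset.mem_of_mem_filter _ hmem
    simp at this
  · rw [if_neg hv, if_neg hv, hcongr, add_zero]

lemma all_eq_one {α : Type*} [DecidableEq α] {s : Finset α} {f : α → ℕ} (h1 : ∀ i ∈ s, f i ≤ 1)
    (h : s.card ≤ ∑ i ∈ s, f i) : ∀ i ∈ s, f i = 1 := by
  intro i hi
  by_contra hne
  have h0 : f i = 0 := by have := h1 i hi; omega
  have hsplit : ∑ x ∈ s.erase i, f x + f i = ∑ x ∈ s, f x := Finset.sum_erase_add s f hi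
  have hb : ∑ x ∈ s.erase i, f x ≤ (s.erase i).card := by
    calc ∑ x ∈ s.erase i, f x ≤ ∑ _x ∈ s.erase i, 1 :=
          Finset.sum_le_sum (fun x hx => h1 x (Finset.mem_of_mem_erase hx))
      _ = (s.erase i).card := by simp
  have hc : (s.erase i).card = s.card - 1 := Finset.card_erase_of_mem hi
  have hcpos : 1 ≤ s.card := Finset.card_pos.mpr ⟨i, hi⟩
  omega

end Helpers

section Blowup
variable [Fintype V] [DecidableEq V]

theorem blowup (G : SimpleGraph V) (hG : IsPerfect G) :
    ∀ (N : ℕ) (p : V → ℕ) (q : ℕ), (∑ v, p v = N) →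
      (∀ K : Finset V, G.IsClique (K : Set V) → ∑ v ∈ K, p v ≤ q) →
      ∃ A : ℕ → Finset V, (∀ i, IsStableSet G (A i)) ∧
        ∀ v, ((Finset.range q).filter (fun i => v ∈ A i)).card = p v := by
  intro N
  induction N using Nat.strong_induction_on with
  | _ N IH =>
  intro p q hN hq
  by_cases hsmall : ∀ v, p v ≤ 1
  · -- base case : p is 0/1-valued; use a colouring of the induced subgraph on supp p
    classical
    set S : Set V := {v | p v = 1} with hS
    have hcol : (G.induce S).Colorable q := by
      rw [← chromaticNumber_le_iff_colorable, hG S, cliqueNumber_eq_maxCliqueCard,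
        Nat.cast_le]
      apply maxCliqueCard_le
      intro K' hK'
      have hKclique := clique_map_val hK'
      set K : Finset V := K'.map (Function.Embedding.subtype _) with hK
      have hcard : K.card = K'.card := Finset.card_map _
      have hsum : ∑ v ∈ K, p v = K.card := by
        rw [Finset.sum_congr rfl (g := fun _ => 1), Finset.sum_const, smul_eq_mul, mul_one]
        intro v hv
        rw [hK, Finset.mem_map] at hv
        obtain ⟨a, _, rfl⟩ := hv
        exact a.2
      have := hq K hKclique
      omega
    obtain ⟨C⟩ := hcol
    refine ⟨fun i => Finset.univ.filter (fun v => ∃ hv : v ∈ S, ((C ⟨v, hv⟩ : Fin q) : ℕ) = i),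
      ?_, ?_⟩
    · intro i u hu v hv hadj
      rw [Finset.mem_filter] at hu hv
      obtain ⟨-, hu', hcu⟩ := hu
      obtain ⟨-, hv', hcv⟩ := hv
      have hadj' : (G.induce S).Adj ⟨u, hu'⟩ ⟨v, hv'⟩ := by
        simp only [comap_adj, Function.Embedding.coe_subtype]
        exact hadj
      exact C.valid hadj' (by ext; rw [hcu, hcv])
    · intro v
      by_cases hv : v ∈ S
      · have hfe : (Finset.range q).filter
            (fun i => v ∈ Finset.univ.filter
              (fun v => ∃ hv : v ∈ S, ((C ⟨v, hv⟩ : Fin q) : ℕ) = i))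
            = {((C ⟨v, hv⟩ : Fin q) : ℕ)} := by
          ext i
          simp only [Finset.mem_filter, Finset.mem_range, Finset.mem_univ, true_and,
            Finset.mem_singleton]
          constructor
          · rintro ⟨-, hv', rfl⟩
            rfl
          · rintro rfl
            exact ⟨Fin.is_lt _, hv, rfl⟩
        rw [hfe, Finset.card_singleton]
        exact (hv : p v = 1).symm
      · have hp0 : p v = 0 := by
          have := hsmall v
          have : ¬ p v = 1 := hv
          omega
        rw [hp0, Finset.card_eq_zero, Finset.filter_eq_empty_iff]
        intro i _
        rw [Finset.mem_filter]
        rintro ⟨-, hv', -⟩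
        exact hv hv'
  · -- inductive step : some vertex has weight ≥ 2
    push_neg at hsmall
    obtain ⟨u, hu⟩ := hsmall
    have hsingle : G.IsClique (({u} : Finset V) : Set V) := by
      simp [SimpleGraph.IsClique]
    have hq2 : 2 ≤ q := by
      have := hq {u} hsingle
      rw [Finset.sum_singleton] at this
      omega
    obtain ⟨r, rfl⟩ : ∃ r, q = r + 1 := ⟨q - 1, by omega⟩
    set p' : V → ℕ := Function.update p u (p u - 1) with hp'
    have hp'u : p' u = p u - 1 := Function.update_self u _ p
    have hp'v : ∀ v, v ≠ u → p' v = p v := fun v hv => Function.update_of_ne hv _ p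
    have hp'le : ∀ v, p' v ≤ p v := by
      intro v
      by_cases h : v = u
      · subst h; rw [hp'u]; omega
      · rw [hp'v v h]
    have hN' : ∑ v, p' v < N := by
      rw [← hN]
      apply Finset.sum_lt_sum (fun v _ => hp'le v)
      exact ⟨u, Finset.mem_univ u, by rw [hp'u]; omega⟩
    have hq' : ∀ K : Finset V, G.IsClique (K : Set V) → ∑ v ∈ K, p' v ≤ r + 1 :=
      fun K hK => le_trans (Finset.sum_le_sum (fun v _ => hp'le v)) (hq K hK)
    have hsum_p_p' : ∀ K : Finset V, u ∈ K → ∑ v ∈ K, p v = ∑ v ∈ K, p' v + 1 := by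
      intro K hKu
      have h1 : ∑ v ∈ K.erase u, p v + p u = ∑ v ∈ K, p v := Finset.sum_erase_add K p hKu
      have h2 : ∑ v ∈ K.erase u, p' v + p' u = ∑ v ∈ K, p' v := Finset.sum_erase_add K p' hKu
      have h3 : ∑ v ∈ K.erase u, p v = ∑ v ∈ K.erase u, p' v := by
        apply Finset.sum_congr rfl
        intro v hv
        exact (hp'v v (Finset.ne_of_mem_erase hv)).symm
      rw [hp'u] at h2
      omega
    have hKavoid : ∀ K : Finset V, G.IsClique (K : Set V) → ∑ v ∈ K, p' v = r + 1 → u ∉ K := by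
      intro K hK hKeq hKu
      have := hq K hK
      have := hsum_p_p' K hKu
      omega
    obtain ⟨A', hA'st, hA'cnt⟩ := IH _ hN' p' (r + 1) rfl hq'
    have hfilter_u : ((Finset.range (r+1)).filter (fun i => u ∈ A' i)).Nonempty := by
      rw [← Finset.card_pos, hA'cnt u, hp'u]
      omega
    obtain ⟨i₀, hi₀⟩ := hfilter_u
    rw [Finset.mem_filter] at hi₀
    obtain ⟨hi₀r, hui₀⟩ := hi₀
    have hi₀lt : i₀ < r + 1 := Finset.mem_range.mp hi₀r
    have hp'1 : ∀ v ∈ A' i₀, 1 ≤ p' v := by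
      intro v hv
      rw [← hA'cnt v]
      apply Finset.card_pos.mpr
      exact ⟨i₀, Finset.mem_filter.mpr ⟨hi₀r, hv⟩⟩
    set p'' : V → ℕ := fun v => if v ∈ A' i₀ \ {u} then p' v - 1 else p' v with hp''
    have hp''le : ∀ v, p'' v ≤ p' v := by
      intro v
      rw [hp'']
      dsimp only
      split <;> omega
    have hN'' : ∑ v, p'' v < N := lt_of_le_of_lt (Finset.sum_le_sum fun v _ => hp''le v) hN'
    have hq'' : ∀ K : Finset V, G.IsClique (K : Set V) → ∑ v ∈ K, p'' v ≤ r := by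
      intro K hK
      by_cases hKr : ∑ v ∈ K, p' v ≤ r
      · exact le_trans (Finset.sum_le_sum fun v _ => hp''le v) hKr
      · have hKeq : ∑ v ∈ K, p' v = r + 1 := le_antisymm (hq' K hK) (by omega)
        have huK : u ∉ K := hKavoid K hK hKeq
        have hswap : ∑ v ∈ K, p' v
            = ∑ i ∈ Finset.range (r+1), (K.filter (· ∈ A' i)).card := by
          calc ∑ v ∈ K, p' v
              = ∑ v ∈ K, ((Finset.range (r+1)).filter (fun i => v ∈ A' i)).card :=
                Finset.sum_congr rfl (fun v _ => (hA'cnt v).symm)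
            _ = ∑ v ∈ K, ∑ i ∈ Finset.range (r+1), (if v ∈ A' i then 1 else 0) :=
                Finset.sum_congr rfl (fun v _ => Finset.card_filter _ _)
            _ = ∑ i ∈ Finset.range (r+1), ∑ v ∈ K, (if v ∈ A' i then 1 else 0) :=
                Finset.sum_comm
            _ = ∑ i ∈ Finset.range (r+1), (K.filter (· ∈ A' i)).card :=
                Finset.sum_congr rfl (fun i _ => (Finset.card_filter _ _).symm)
        have hone : ∀ i ∈ Finset.range (r+1), (K.filter (· ∈ A' i)).card = 1 := by
          apply all_eq_one
          · intro i _
            exact clique_stable_card G hK (hA'st i)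
          · rw [← hswap, hKeq, Finset.card_range]
        obtain ⟨w, hw⟩ : ∃ w, w ∈ K.filter (· ∈ A' i₀) := by
          have := hone i₀ hi₀r
          rw [Finset.card_eq_one] at this
          obtain ⟨w, hw⟩ := this
          exact ⟨w, by rw [hw]; exact Finset.mem_singleton_self w⟩
        rw [Finset.mem_filter] at hw
        obtain ⟨hwK, hwA⟩ := hw
        have hwu : w ≠ u := fun h => huK (h ▸ hwK)
        have hwd : w ∈ A' i₀ \ {u} := Finset.mem_sdiff.mpr ⟨hwA, by simp [hwu]⟩
        have hsplit'' : ∑ x ∈ K.erase w, p'' x + p'' w = ∑ x ∈ K, p'' x :=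
          Finset.sum_erase_add K p'' hwK
        have hsplit' : ∑ x ∈ K.erase w, p' x + p' w = ∑ x ∈ K, p' x :=
          Finset.sum_erase_add K p' hwK
        have h1 : p'' w = p' w - 1 := by rw [hp'']; dsimp only; rw [if_pos hwd]
        have h2 : 1 ≤ p' w := hp'1 w hwA
        have h3 : ∑ x ∈ K.erase w, p'' x ≤ ∑ x ∈ K.erase w, p' x :=
          Finset.sum_le_sum fun v _ => hp''le v
        omega
    obtain ⟨C, hCst, hCcnt⟩ := IH _ hN'' p'' r rfl hq''
    refine ⟨fun i => if i = r then A' i₀ else C i, ?_, ?_⟩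
    · intro i
      dsimp only
      by_cases h : i = r
      · rw [if_pos h]; exact hA'st i₀
      · rw [if_neg h]; exact hCst i
    · intro v
      dsimp only
      rw [count_snoc C (A' i₀) r v, hCcnt]
      by_cases hvA : v ∈ A' i₀
      · rw [if_pos hvA]
        by_cases hvu : v = u
        · subst hvu
          have : p'' v = p' v := by
            rw [hp'']; dsimp only
            rw [if_neg (by simp)]
          rw [this, hp'u]
          omega
        · have h1 : p'' v = p' v - 1 := by
            rw [hp'']; dsimp only
            rw [if_pos (Finset.mem_sdiff.mpr ⟨hvA, by simp [hvu]⟩)]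
          have h2 : 1 ≤ p' v := hp'1 v hvA
          have h3 : p' v = p v := hp'v v hvu
          omega
      · rw [if_neg hvA, add_zero]
        have hvu : v ≠ u := fun h => hvA (h ▸ hui₀)
        have : p'' v = p' v := by
          rw [hp'']; dsimp only
          rw [if_neg (fun h => hvA (Finset.mem_sdiff.mp h).1)]
        rw [this, hp'v v hvu]

end Blowup

section DirectionA
variable [Fintype V] [DecidableEq V]

theorem qstab_subset_stab_of_perfect (G : SimpleGraph V) (hG : IsPerfect G) :
    qstabPolytope G ⊆ stabPolytope G := by
  intro x hx
  obtain ⟨hbox, hcl⟩ := hx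
  have hclosed := isClosed_stab G
  have hxcl : x ∈ closure (stabPolytope G) := by
    rw [Metric.mem_closure_iff]
    intro ε hε
    obtain ⟨D, hD⟩ := exists_nat_gt (1/ε)
    have hD0 : (0:ℝ) < D := lt_trans (by positivity) hD
    have hDinv : 1/(D:ℝ) < ε := by
      rw [div_lt_iff₀ hD0]
      have h1 : 1 < (D:ℝ) * ε := by
        rw [div_lt_iff₀ hε] at hD
        linarith
      linarith
    set p : V → ℕ := fun v => ⌊x v * D⌋₊ with hp
    have hple : ∀ v, (p v : ℝ) ≤ x v * D := by
      intro v
      exact Nat.floor_le (mul_nonneg (hbox v).1 hD0.le)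
    have hq : ∀ K : Finset V, G.IsClique (K : Set V) → ∑ v ∈ K, p v ≤ D := by
      intro K hK
      have hreal : ((∑ v ∈ K, p v : ℕ) : ℝ) ≤ (D : ℝ) := by
        push_cast
        calc ∑ v ∈ K, ((⌊x v * D⌋₊ : ℕ) : ℝ) ≤ ∑ v ∈ K, x v * D :=
              Finset.sum_le_sum (fun v _ => hple v)
          _ = (∑ v ∈ K, x v) * D := (Finset.sum_mul _ _ _).symm
          _ ≤ 1 * (D:ℝ) := mul_le_mul_of_nonneg_right (hcl K hK) hD0.le
          _ = (D:ℝ) := one_mul _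
      exact_mod_cast hreal
    obtain ⟨A, hAst, hAcnt⟩ := blowup G hG (∑ v, p v) p D rfl hq
    refine ⟨fun v => (p v : ℝ) / D, ?_, ?_⟩
    · -- membership in STAB via the convex combination of the colour classes
      have hsumw : ∑ _i ∈ Finset.range D, (1:ℝ)/D = 1 := by
        rw [Finset.sum_const, Finset.card_range, nsmul_eq_mul]
        field_simp
      have hmem := Finset.centerMass_mem_convexHull (t := Finset.range D)
        (s := { x : V → ℝ | ∃ S : Finset V, IsStableSet G S ∧ x = fun v => if v ∈ S then (1:ℝ) else 0 })
        (w := fun _ => (1:ℝ)/D) (z := fun i => fun v => if v ∈ A i then (1:ℝ) else 0)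
        (fun i _ => by positivity) (by rw [hsumw]; norm_num)
        (fun i _ => ⟨A i, hAst i, rfl⟩)
      convert hmem using 1
      · rfl
      rw [Finset.centerMass, hsumw, inv_one, one_smul]
      funext v
      rw [Finset.sum_apply]
      have : ∀ i ∈ Finset.range D, (((1:ℝ)/D) • (fun v => if v ∈ A i then (1:ℝ) else 0)) v
          = (1/D) * (if v ∈ A i then (1:ℝ) else 0) := fun i _ => rfl
      rw [Finset.sum_congr rfl this, ← Finset.mul_sum, Finset.sum_boole, hAcnt v]
      rw [div_mul_eq_mul_div, one_mul]
    · rw [dist_pi_lt_iff hε]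
      intro v
      have h1 : (p v : ℝ)/D ≤ x v := by
        rw [div_le_iff₀ hD0]
        exact hple v
      have h2 : x v < ((p v : ℝ) + 1)/D := by
        rw [lt_div_iff₀ hD0]
        exact_mod_cast Nat.lt_floor_add_one (x v * D)
      have h3 : ((p v : ℝ) + 1)/D = (p v : ℝ)/D + 1/D := by ring
      rw [Real.dist_eq, abs_of_nonneg (by linarith)]
      linarith
  rwa [← hclosed.closure_eq]

end DirectionA

section Inherit
variable [Fintype V] [DecidableEq V]

theorem qstab_eq_stab_induce (G : SimpleGraph V)
    (h : qstabPolytope G = stabPolytope G) (S : Set V) [DecidablePred (· ∈ S)] :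
    qstabPolytope (G.induce S) = stabPolytope (G.induce S) := by
  apply Set.Subset.antisymm _ (stab_subset_qstab _)
  intro x hx
  obtain ⟨hbox, hcl⟩ := hx
  set xt : V → ℝ := fun v => if hv : v ∈ S then x ⟨v, hv⟩ else 0 with hxt
  have hxtq : xt ∈ qstabPolytope G := by
    constructor
    · intro v
      rw [hxt]; dsimp only
      split
      · exact hbox _
      · norm_num
    · intro K hK
      have hzero : ∑ v ∈ K.filter (fun v => ¬ v ∈ S), xt v = 0 :=
        Finset.sum_eq_zero (fun v hv => by
          rw [hxt]; dsimp only; rw [dif_neg (Finset.mem_filter.mp hv).2])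
      have hsplit : ∑ v ∈ K, xt v = ∑ v ∈ K.filter (· ∈ S), xt v := by
        rw [← Finset.sum_filter_add_sum_filter_not K (· ∈ S), hzero, add_zero]
      have hsub : ∑ a ∈ K.subtype (· ∈ S), x a = ∑ v ∈ K.filter (· ∈ S), xt v := by
        rw [← Finset.sum_subtype_eq_sum_filter]
        apply Finset.sum_congr rfl
        intro a _
        rw [hxt]; dsimp only; rw [dif_pos a.2]
      rw [hsplit, ← hsub]
      exact hcl (K.subtype (· ∈ S)) (clique_subtype hK)
  rw [h] at hxtq
  obtain ⟨w, hw0, hwst, hw1, hwx⟩ := exists_of_mem_stab G hxtq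
  have hsupp : ∀ T : Finset V, w T ≠ 0 → ∀ v ∈ T, v ∈ S := by
    intro T hT v hvT
    by_contra hvS
    have h0 : xt v = 0 := by rw [hxt]; dsimp only; rw [dif_neg hvS]
    have hvx := hwx v
    rw [h0] at hvx
    have hnn : ∀ T' ∈ (Finset.univ : Finset (Finset V)),
        0 ≤ w T' * (if v ∈ T' then (1:ℝ) else 0) := by
      intro T' _
      apply mul_nonneg (hw0 T')
      split <;> norm_num
    have := (Finset.sum_eq_zero_iff_of_nonneg hnn).mp hvx.symm T (Finset.mem_univ T)
    rw [if_pos hvT, mul_one] at this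
    exact hT this
  have key : ∀ g : Finset V → ℝ, (∀ T, w T = 0 → g T = 0) →
      ∑ T' : Finset ↥S, g (T'.map (Function.Embedding.subtype _)) = ∑ T : Finset V, g T := by
    intro g hg
    have hinj : ∀ a ∈ (Finset.univ : Finset (Finset ↥S)), ∀ b ∈ (Finset.univ : Finset (Finset ↥S)),
        a.map (Function.Embedding.subtype (· ∈ S)) = b.map (Function.Embedding.subtype (· ∈ S)) →
          a = b :=
      fun a _ b _ hab => Finset.map_injective (Function.Embedding.subtype (· ∈ S)) hab
    have himg := Finset.sum_image (f := g) hinj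
    rw [← himg]
    apply Finset.sum_subset (Finset.subset_univ _)
    intro T _ hT
    apply hg
    by_contra hwT
    apply hT
    have hTS : ∀ v ∈ T, v ∈ S := hsupp T hwT
    rw [Finset.mem_image]
    refine ⟨T.subtype (· ∈ S), Finset.mem_univ _, ?_⟩
    rw [Finset.subtype_map, Finset.filter_true_of_mem hTS]
  apply mem_stab_of (G.induce S) (fun T' : Finset ↥S => w (T'.map (Function.Embedding.subtype _)))
  · intro T'; exact hw0 _
  · intro T' hT'
    intro a ha b hb hadj
    have hG := hwst _ hT'
    apply hG ↑a (Finset.mem_map_of_mem _ ha) ↑b (Finset.mem_map_of_mem _ hb)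
    exact hadj
  · exact key w (fun T hT => hT) ▸ hw1
  · intro v'
    have hv := hwx ↑v'
    have hxv : xt ↑v' = x v' := by rw [hxt]; dsimp only; rw [dif_pos v'.2]
    rw [hxv] at hv
    rw [hv, ← key (fun T => w T * (if ↑v' ∈ T then (1:ℝ) else 0))
      (fun T hT => by rw [hT, zero_mul])]
    apply Finset.sum_congr rfl
    intro T' _
    congr 1
    have : (↑v' ∈ T'.map (Function.Embedding.subtype (· ∈ S))) ↔ v' ∈ T' := by
      constructor
      · intro hm
        rw [Finset.mem_map] at hm
        obtain ⟨a, haT, ha⟩ := hm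
        have ha' : a = v' := Subtype.coe_injective ha
        rwa [← ha']
      · intro hm
        exact Finset.mem_map_of_mem _ hm
    simp only [this]

end Inherit

section DirectionB
universe u

theorem colorable_of_qstab_eq_stab :
    ∀ (n : ℕ) {W : Type u} [Fintype W] [DecidableEq W] (G : SimpleGraph W),
      qstabPolytope G = stabPolytope G →
      (∀ K : Finset W, G.IsClique (K : Set W) → K.card ≤ n) → G.Colorable n := by
  intro n
  induction n with
  | zero =>
    intro W _ _ G h hcl
    have hW : IsEmpty W := by
      by_contra hne
      rw [not_isEmpty_iff] at hne
      obtain ⟨v⟩ := hne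
      have := hcl {v} (by simp [SimpleGraph.IsClique])
      simp at this
    exact ⟨⟨fun v => isEmptyElim v, fun {a b} _ => isEmptyElim a⟩⟩
  | succ n IH =>
    intro W _ _ G h hcl
    by_cases hW : IsEmpty W
    · exact ⟨⟨fun v => isEmptyElim v, fun {a b} _ => isEmptyElim a⟩⟩
    classical
    set x : W → ℝ := fun _ => 1/(n+1 : ℝ) with hx
    have hpos : (0:ℝ) < n + 1 := by positivity
    have hxq : x ∈ qstabPolytope G := by
      constructor
      · intro v
        constructor
        · positivity
        · rw [hx]; dsimp only
          rw [div_le_one hpos]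
          have : (1:ℝ) ≤ n + 1 := by
            have : (0:ℝ) ≤ n := Nat.cast_nonneg n
            linarith
          linarith
      · intro K hK
        rw [hx]; dsimp only
        rw [Finset.sum_const, nsmul_eq_mul, mul_one_div, div_le_one hpos]
        have := hcl K hK
        exact_mod_cast this
    rw [h] at hxq
    obtain ⟨w, hw0, hwst, hw1, hwx⟩ := exists_of_mem_stab G hxq
    obtain ⟨T, hT⟩ : ∃ T, w T ≠ 0 := by
      by_contra hc
      push_neg at hc
      rw [Finset.sum_eq_zero (fun T _ => hc T)] at hw1
      norm_num at hw1
    have hTst := hwst T hT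
    have hmeet : ∀ K : Finset W, G.IsClique (K : Set W) → K.card = n + 1 →
        ∃ v ∈ K, v ∈ T := by
      intro K hK hKcard
      have hsumx : ∑ v ∈ K, x v = 1 := by
        rw [hx]; dsimp only
        rw [Finset.sum_const, hKcard, nsmul_eq_mul, mul_one_div]
        field_simp
        norm_num
      have hswap : ∑ v ∈ K, x v
          = ∑ Tt : Finset W, w Tt * ((K.filter (· ∈ Tt)).card : ℝ) := by
        calc ∑ v ∈ K, x v
            = ∑ v ∈ K, ∑ Tt : Finset W, w Tt * (if v ∈ Tt then (1:ℝ) else 0) :=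
              Finset.sum_congr rfl (fun v _ => hwx v)
          _ = ∑ Tt : Finset W, ∑ v ∈ K, w Tt * (if v ∈ Tt then (1:ℝ) else 0) :=
              Finset.sum_comm
          _ = ∑ Tt : Finset W, w Tt * ((K.filter (· ∈ Tt)).card : ℝ) := by
              apply Finset.sum_congr rfl
              intro Tt _
              rw [← Finset.mul_sum, sum_indicator_eq]
      have hzero : ∑ Tt : Finset W, w Tt * (1 - ((K.filter (· ∈ Tt)).card : ℝ)) = 0 := by
        simp only [mul_sub, mul_one]
        rw [Finset.sum_sub_distrib, hw1, ← hswap, hsumx, sub_self]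
      have hnn : ∀ Tt ∈ (Finset.univ : Finset (Finset W)),
          0 ≤ w Tt * (1 - ((K.filter (· ∈ Tt)).card : ℝ)) := by
        intro Tt _
        rcases eq_or_ne (w Tt) 0 with h' | h'
        · rw [h', zero_mul]
        · apply mul_nonneg (hw0 Tt)
          rw [sub_nonneg]
          exact_mod_cast clique_stable_card G hK (hwst Tt h')
      have hTzero := (Finset.sum_eq_zero_iff_of_nonneg hnn).mp hzero T (Finset.mem_univ T)
      have hcT : ((K.filter (· ∈ T)).card : ℝ) = 1 := by
        rcases mul_eq_zero.mp hTzero with h' | h'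
        · exact absurd h' hT
        · linarith
      have hcT' : (K.filter (· ∈ T)).card = 1 := by exact_mod_cast hcT
      rw [Finset.card_eq_one] at hcT'
      obtain ⟨a, ha⟩ := hcT'
      have : a ∈ K.filter (· ∈ T) := by rw [ha]; exact Finset.mem_singleton_self a
      rw [Finset.mem_filter] at this
      exact ⟨a, this.1, this.2⟩
    set S : Set W := {v | v ∉ T} with hS
    letI : DecidablePred (· ∈ S) := Classical.decPred _
    have h' := qstab_eq_stab_induce G h S
    have hcl' : ∀ K' : Finset ↥S, (G.induce S).IsClique (K' : Set ↥S) → K'.card ≤ n := by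
      intro K' hK'
      have hKc := clique_map_val hK'
      have hle : (K'.map (Function.Embedding.subtype _)).card ≤ n + 1 :=
        hcl _ hKc
      rw [Finset.card_map] at hle
      by_contra hgt
      push_neg at hgt
      have hKcard : (K'.map (Function.Embedding.subtype _)).card = n + 1 := by
        rw [Finset.card_map]; omega
      obtain ⟨v, hvK, hvT⟩ := hmeet _ hKc hKcard
      rw [Finset.mem_map] at hvK
      obtain ⟨a, _, rfl⟩ := hvK
      exact a.2 hvT
    have hcol' := IH (G.induce S) h' hcl'
    obtain ⟨C⟩ := hcol'
    refine ⟨SimpleGraph.Coloring.mk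
      (fun v => if hv : v ∈ T then Fin.last n else (C ⟨v, hv⟩).castSucc) ?_⟩
    intro a b hadj
    by_cases haT : a ∈ T <;> by_cases hbT : b ∈ T
    · exact absurd hadj (hTst a haT b hbT)
    · rw [dif_pos haT, dif_neg hbT]
      intro hEq
      have := congrArg Fin.val hEq
      rw [Fin.val_last, Fin.coe_castSucc] at this
      have := (C ⟨b, hbT⟩).is_lt
      omega
    · rw [dif_neg haT, dif_pos hbT]
      intro hEq
      have := congrArg Fin.val hEq
      rw [Fin.val_last, Fin.coe_castSucc] at this
      have := (C ⟨a, haT⟩).is_lt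
      omega
    · rw [dif_neg haT, dif_neg hbT]
      intro hEq
      have hCC : C ⟨a, haT⟩ = C ⟨b, hbT⟩ := by
        apply Fin.castSucc_injective
        exact hEq
      apply C.valid _ hCC
      show (G.induce S).Adj ⟨a, haT⟩ ⟨b, hbT⟩
      simp only [comap_adj, Function.Embedding.coe_subtype]
      exact hadj

end DirectionB

end AuxiliaryLemmas

/-- A finite simple graph `G` is perfect iff the solution set of the
box and clique constraints equals STAB(G). -/
theorem isPerfect_iff_qstab_eq_stab {V : Type*} [Fintype V] [DecidableEq V]
    (G : SimpleGraph V) :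
    IsPerfect G ↔ qstabPolytope G = stabPolytope G := by
  constructor
  · intro hG
    exact Set.Subset.antisymm (qstab_subset_stab_of_perfect G hG) (stab_subset_qstab G)
  · intro h S
    letI : DecidablePred (· ∈ S) := Classical.decPred _
    have h' := qstab_eq_stab_induce G h S
    have hcol : (G.induce S).Colorable (maxCliqueCard (G.induce S)) :=
      colorable_of_qstab_eq_stab _ (G.induce S) h'
        (fun K hK => card_le_maxCliqueCard _ hK)
    exact chromaticNumber_eq_cliqueNumber_of_colorable _ hcol

end TPerfection
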